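/- arXiv:2006.01572 — 3 statements merged into one kernel-verified Lean document; each statement's English description precedes it below -/
import Mathlib

section
/- Let ∈ ℝ^{(d+1)×(d+1)} be a symmetric matrix written in block form = [[A, b],[bᵀ, c]] with A ∈ ℝ^{d×d} symmetric positive semidefinite, b ∈ ℝ^d and c ∈ ℝ. Then is positive semidefinite if and only if (Id − A A†) b = 0 and the Schur complement satisfies c − ⟨A† b, b⟩ ≥ 0. -/
open Matrix

/-- `B` is the Moore-Penrose pseudoinverse of `A` (Penrose characterization). -/
def IsMoorePenroseInverse {d m : ℕ} (A : Matrix (Fin d) (Fin m) ℝ)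
    (B : Matrix (Fin m) (Fin d) ℝ) : Prop :=
  A * B * A = A ∧ B * A * B = B ∧ (A * B)ᵀ = A * B ∧ (B * A)ᵀ = B * A

open Classical in
/-- The Moore-Penrose pseudoinverse `A†` of a real matrix. -/
noncomputable def moorePenrose {d m : ℕ} (A : Matrix (Fin d) (Fin m) ℝ) :
    Matrix (Fin m) (Fin d) ℝ :=
  if h : ∃ B, IsMoorePenroseInverse A B then h.choose else 0

/-- The symmetric block matrix `Â = [[A, b], [bᵀ, c]]`. -/
def hatMatrix {d : ℕ} (A : Matrix (Fin d) (Fin d) ℝ) (b : Fin d → ℝ) (c : ℝ) :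
    Matrix (Fin d ⊕ Unit) (Fin d ⊕ Unit) ℝ :=
  Matrix.fromBlocks A (Matrix.of fun i _ => b i) (Matrix.of fun _ j => b j)
    (Matrix.of fun _ _ => c)

/-- Every real Hermitian (symmetric) matrix has a Moore-Penrose pseudoinverse. -/
lemma aux_exists_mp {d : ℕ} {A : Matrix (Fin d) (Fin d) ℝ} (hA : A.IsHermitian) :
    ∃ B, IsMoorePenroseInverse A B := by
  classical
  set U : Matrix (Fin d) (Fin d) ℝ := (hA.eigenvectorUnitary : Matrix (Fin d) (Fin d) ℝ) with hU
  have hUU : star U * U = 1 := mem_unitaryGroup_iff'.mp hA.eigenvectorUnitary.2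
  set ev := hA.eigenvalues with hev
  have hAeq : A = U * diagonal ev * star U := by
    have := hA.spectral_theorem
    simpa [RCLike.ofReal_real_eq_id] using this
  set P : (Fin d → ℝ) → Matrix (Fin d) (Fin d) ℝ := fun v => U * diagonal v * star U with hP
  have hmul : ∀ v w, P v * P w = P (v * w) := by
    intro v w
    simp only [hP]
    calc U * diagonal v * star U * (U * diagonal w * star U)
        = U * diagonal v * (star U * U) * diagonal w * star U := by
          simp only [Matrix.mul_assoc]
      _ = U * (diagonal v * diagonal w) * star U := by
          rw [hUU]; simp only [Matrix.mul_assoc, Matrix.one_mul]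
      _ = U * diagonal (v * w) * star U := by rw [diagonal_mul_diagonal]; rfl
  have hTH : ∀ (M : Matrix (Fin d) (Fin d) ℝ), Mᵀ = Mᴴ := by
    intro M; ext i j; simp [conjTranspose_apply]
  have htr : ∀ v, (P v)ᵀ = P v := by
    intro v
    have hsU : star U = Uᵀ := by rw [Matrix.star_eq_conjTranspose, hTH]
    show (U * diagonal v * star U)ᵀ = U * diagonal v * star U
    rw [hsU, transpose_mul, transpose_mul, transpose_transpose, diagonal_transpose,
      Matrix.mul_assoc]
  have hkey : (ev * fun i => (ev i)⁻¹) * ev = ev := by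
    funext i
    rcases eq_or_ne (ev i) 0 with h | h <;>
      simp [Pi.mul_apply, h]
  have hkey2 : ((fun i => (ev i)⁻¹) * ev) * (fun i => (ev i)⁻¹) = fun i => (ev i)⁻¹ := by
    funext i
    rcases eq_or_ne (ev i) 0 with h | h <;>
      simp [Pi.mul_apply, h]
  have hAP : A = P ev := hAeq
  refine ⟨P (fun i => (ev i)⁻¹), ?_, ?_, ?_, ?_⟩
  · rw [hAP, hmul, hmul, hkey]
  · rw [hAP, hmul, hmul, hkey2]
  · rw [hAP, hmul, htr]
  · rw [hAP, hmul, htr]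

lemma aux_mp_spec {d : ℕ} {A : Matrix (Fin d) (Fin d) ℝ} (hA : A.IsHermitian) :
    IsMoorePenroseInverse A (moorePenrose A) := by
  classical
  have h : ∃ B, IsMoorePenroseInverse A B := aux_exists_mp hA
  rw [moorePenrose, dif_pos h]
  exact h.choose_spec

/-- the quadratic form of the block matrix -/
lemma aux_quad {d : ℕ} (A : Matrix (Fin d) (Fin d) ℝ) (b : Fin d → ℝ) (c : ℝ)
    (u : Fin d → ℝ) (t : ℝ) :
    (Sum.elim u (fun _ : Unit => t)) ⬝ᵥ
      ((hatMatrix A b c) *ᵥ (Sum.elim u fun _ : Unit => t))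
      = u ⬝ᵥ A *ᵥ u + 2*t*(b ⬝ᵥ u) + c*t^2 := by
  have h1 : (Matrix.of fun i (_ : Unit) => b i) *ᵥ (fun _ => t) = t • b := by
    funext i; simp [mulVec, dotProduct, mul_comm]
  have h2 : (Matrix.of fun (_ : Unit) j => b j) *ᵥ u = fun _ => b ⬝ᵥ u := by
    funext _; simp [mulVec, dotProduct]
  have h3 : (Matrix.of fun (_ : Unit) (_ : Unit) => c) *ᵥ (fun _ => t) = fun _ => c * t := by
    funext _; simp [mulVec, dotProduct]
  rw [hatMatrix, fromBlocks_mulVec]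
  simp only [Sum.elim_comp_inl, Sum.elim_comp_inr]
  rw [h1, h2, h3, sumElim_dotProduct_sumElim, dotProduct_add, dotProduct_smul]
  have h4 : (fun _ : Unit => t) ⬝ᵥ (((fun _ : Unit => b ⬝ᵥ u) + fun _ : Unit => c * t))
      = t * (b ⬝ᵥ u + c * t) := by
    simp [dotProduct]
  rw [h4, dotProduct_comm u b]
  simp only [smul_eq_mul]
  ring

lemma aux_dsym {d : ℕ} (M : Matrix (Fin d) (Fin d) ℝ) (hM : Mᵀ = M) (u v : Fin d → ℝ) :
    (M *ᵥ u) ⬝ᵥ v = u ⬝ᵥ (M *ᵥ v) := by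
  rw [dotProduct_mulVec, ← vecMul_transpose, hM, dotProduct_comm]

/-- `Â = [[A, b],[bᵀ, c]]` with `A` symmetric positive semidefinite is positive semidefinite
iff `(Id − A A†) b = 0` and the Schur complement satisfies `c − ⟨A† b, b⟩ ≥ 0`. -/
theorem stmt5 {d : ℕ} (A : Matrix (Fin d) (Fin d) ℝ) (hA : A.PosSemidef)
    (b : Fin d → ℝ) (c : ℝ) :
    (hatMatrix A b c).PosSemidef ↔
      ((1 - A * moorePenrose A).mulVec b = 0 ∧
        0 ≤ c - (moorePenrose A).mulVec b ⬝ᵥ b) := by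
  classical
  set B := moorePenrose A with hBdef
  obtain ⟨h1, h2, h3, h4⟩ := aux_mp_spec hA.isHermitian
  have hAt : Aᵀ = A := by
    ext i j
    have := congrFun (congrFun hA.isHermitian i) j
    simpa using this
  -- M := 1 - A*B is a symmetric projection killing A on the left
  set M : Matrix (Fin d) (Fin d) ℝ := 1 - A * B with hMdef
  have hMt : Mᵀ = M := by
    rw [hMdef, transpose_sub, transpose_one, h3]
  have hMA : M * A = 0 := by
    rw [hMdef, sub_mul, one_mul, h1, sub_self]
  have hMM : M * M = M := by
    have hMAB : M * (A * B) = 0 := by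
      rw [← Matrix.mul_assoc, hMA, Matrix.zero_mul]
    nth_rewrite 2 [hMdef]
    rw [Matrix.mul_sub, Matrix.mul_one, hMAB, sub_zero]
  constructor
  · intro h
    have key : ∀ (u : Fin d → ℝ) (t : ℝ), 0 ≤ u ⬝ᵥ A *ᵥ u + 2*t*(b ⬝ᵥ u) + c*t^2 := by
      intro u t
      have := h.dotProduct_mulVec_nonneg (Sum.elim u fun _ : Unit => t)
      rwa [star_trivial, aux_quad] at this
    set r : Fin d → ℝ := M *ᵥ b with hrdef
    have hrAr : r ⬝ᵥ A *ᵥ r = 0 := by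
      rw [hrdef, aux_dsym M hMt, mulVec_mulVec, hMA]
      simp
    have hbr : b ⬝ᵥ r = r ⬝ᵥ r := by
      conv_lhs => rw [show b ⬝ᵥ r = b ⬝ᵥ (M *ᵥ b) from rfl, ← hMM, ← mulVec_mulVec,
        ← aux_dsym M hMt]
    have hrr0 : r ⬝ᵥ r = 0 := by
      by_contra hne
      have hpos : 0 < r ⬝ᵥ r := by
        rcases lt_or_eq_of_le (Finset.sum_nonneg fun i _ => mul_self_nonneg (r i) :
            (0:ℝ) ≤ r ⬝ᵥ r) with h' | h'
        · exact h'
        · exact absurd h'.symm hne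
      set n : ℝ := r ⬝ᵥ r with hn
      rcases le_or_gt c 0 with hc | hc
      · have hk := key r (-1)
        rw [hrAr, hbr] at hk
        nlinarith [hk, hpos, hc]
      · have hk := key r (-(n / c))
        rw [hrAr, hbr] at hk
        rw [div_eq_mul_inv] at hk
        have hcc : c * c⁻¹ = 1 := mul_inv_cancel₀ hc.ne'
        have hci : 0 < c⁻¹ := inv_pos.mpr hc
        nlinarith [hk, hcc, hci, hc, mul_pos hpos hpos, mul_pos (mul_pos hpos hpos) hci]
    have hr0 : r = 0 := by
      funext i
      have : ∑ j, r j * r j = 0 := hrr0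
      have hzero := (Finset.sum_eq_zero_iff_of_nonneg
        (fun j _ => mul_self_nonneg (r j))).mp this i (Finset.mem_univ i)
      exact mul_self_eq_zero.mp hzero
    refine ⟨hr0, ?_⟩
    have hABb : (A * B) *ᵥ b = b := by
      have := hr0
      rw [hrdef, hMdef, sub_mulVec, one_mulVec, sub_eq_zero] at this
      exact this.symm
    have hk := key (B *ᵥ b) (-1)
    have hABb' : A *ᵥ (B *ᵥ b) = b := by rw [mulVec_mulVec, hABb]
    rw [hABb'] at hk
    have hcomm : b ⬝ᵥ B *ᵥ b = B *ᵥ b ⬝ᵥ b := dotProduct_comm _ _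
    rw [dotProduct_comm (B *ᵥ b) b] at hk
    nlinarith [hk]
  · rintro ⟨hr, hs⟩
    have hABb : (A * B) *ᵥ b = b := by
      rw [sub_mulVec, one_mulVec, sub_eq_zero] at hr
      exact hr.symm
    have hABb' : A *ᵥ (B *ᵥ b) = b := by rw [mulVec_mulVec, hABb]
    rw [posSemidef_iff_dotProduct_mulVec]
    constructor
    · -- Hermitian
      show (hatMatrix A b c)ᴴ = hatMatrix A b c
      have hAsymm : ∀ i j, A i j = A j i := by
        intro i j
        have := congrFun (congrFun hAt j) i
        simpa using this
      ext i j
      rcases i with i | i <;> rcases j with j | j <;>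
        simp [hatMatrix, fromBlocks, conjTranspose_apply] <;>
        exact hAsymm _ _
    · intro x
      have hx : x = Sum.elim (fun i => x (Sum.inl i)) (fun _ : Unit => x (Sum.inr ())) := by
        funext i; rcases i with i | ⟨⟩ <;> rfl
      rw [star_trivial, hx, aux_quad]
      set u : Fin d → ℝ := fun i => x (Sum.inl i)
      set t : ℝ := x (Sum.inr ())
      set w : Fin d → ℝ := u + t • (B *ᵥ b) with hwdef
      have hAw : A *ᵥ w = A *ᵥ u + t • b := by
        rw [hwdef, mulVec_add, mulVec_smul, hABb']
      have hwAw : w ⬝ᵥ A *ᵥ w = u ⬝ᵥ A *ᵥ u + 2*t*(b ⬝ᵥ u) + t^2 * (B *ᵥ b ⬝ᵥ b) := by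
        have hc1 : (B *ᵥ b) ⬝ᵥ (A *ᵥ u) = b ⬝ᵥ u := by
          rw [← aux_dsym A hAt (B *ᵥ b) u, hABb']
        have hc2 : u ⬝ᵥ b = b ⬝ᵥ u := dotProduct_comm _ _
        rw [hAw]
        simp only [hAw, hwdef, add_dotProduct, smul_dotProduct, dotProduct_add,
          dotProduct_smul, smul_eq_mul]
        rw [hc1, hc2]
        ring
      have hposA := hA.dotProduct_mulVec_nonneg w
      rw [star_trivial] at hposA
      nlinarith [mul_nonneg (sq_nonneg t) hs, hwAw, hposA]
end

section
/- Let A, B ∈ ℝ^{d×d} be symmetric positive semidefinite matrices and b ∈ ℝ^d. Then there exist symmetric positive semidefinite matrices Â, B̂ ∈ ℝ^{(d+1)×(d+1)} with upper-left d×d blocks equal to A and B respectively, and with Â_{i,d+1} + B̂_{i,d+1} = b_i for i = 1,...,d, if and only if the system Ax + By = b has a solution x, y ∈ ℝ^d. -/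
open Matrix

lemma symm_range_eq_ker_orth {d : ℕ} {A : Matrix (Fin d) (Fin d) ℝ} (hA : A.IsHermitian) :
    LinearMap.range (Matrix.toEuclideanLin A) = (LinearMap.ker (Matrix.toEuclideanLin A))ᗮ := by
  set T := Matrix.toEuclideanLin A with hT
  have hsym : T.IsSymmetric := Matrix.isHermitian_iff_isSymmetric.mp hA
  have hle : LinearMap.range T ≤ (LinearMap.ker T)ᗮ := by
    rintro w ⟨u, rfl⟩
    rw [Submodule.mem_orthogonal]
    intro v hv
    rw [LinearMap.mem_ker] at hv
    rw [← hsym v u, hv, inner_zero_left]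
  refine Submodule.eq_of_le_of_finrank_eq hle ?_
  have h1 := LinearMap.finrank_range_add_finrank_ker T
  have h2 := Submodule.finrank_add_finrank_orthogonal (K := LinearMap.ker T)
  omega

lemma exists_mulVec_eq {d : ℕ} {A : Matrix (Fin d) (Fin d) ℝ} (hA : A.IsHermitian)
    (c : Fin d → ℝ) (h : ∀ u : Fin d → ℝ, A.mulVec u = 0 → c ⬝ᵥ u = 0) :
    ∃ x : Fin d → ℝ, A.mulVec x = c := by
  set T := Matrix.toEuclideanLin A with hT
  have hc : (WithLp.equiv 2 (Fin d → ℝ)).symm c ∈ (LinearMap.ker T)ᗮ := by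
    rw [Submodule.mem_orthogonal]
    intro v hv
    rw [LinearMap.mem_ker] at hv
    have hv' : A.mulVec (WithLp.equiv 2 (Fin d → ℝ) v) = 0 := by
      have := congrArg (WithLp.equiv 2 (Fin d → ℝ)) hv
      simpa [hT, Matrix.toEuclideanLin_apply] using this
    have := h _ hv'
    rw [real_inner_comm]
    simpa [PiLp.inner_apply, dotProduct, RCLike.inner_apply, mul_comm] using this
  rw [← symm_range_eq_ker_orth hA] at hc
  obtain ⟨x, hx⟩ := hc
  refine ⟨WithLp.equiv 2 (Fin d → ℝ) x, ?_⟩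
  have := congrArg (WithLp.equiv 2 (Fin d → ℝ)) hx
  simpa [Matrix.toEuclideanLin_apply] using this

/-- If `M` is a PSD extension of `A` and `A u = 0`, then the last column of `M` is
orthogonal to `u`. -/
lemma ext_col_orth {d : ℕ} {A : Matrix (Fin d) (Fin d) ℝ}
    {M : Matrix (Fin d ⊕ Unit) (Fin d ⊕ Unit) ℝ} (hM : M.PosSemidef)
    (hblk : ∀ i j, M (Sum.inl i) (Sum.inl j) = A i j)
    (u : Fin d → ℝ) (hu : A.mulVec u = 0) :
    (fun i => M (Sum.inl i) (Sum.inr ())) ⬝ᵥ u = 0 := by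
  set s : ℝ := (fun i => M (Sum.inl i) (Sum.inr ())) ⬝ᵥ u with hs
  set α : ℝ := M (Sum.inr ()) (Sum.inr ()) with hα
  have hherm : ∀ j, M (Sum.inr ()) (Sum.inl j) = M (Sum.inl j) (Sum.inr ()) := by
    intro j
    conv_lhs => rw [← hM.isHermitian.eq]
    simp [Matrix.conjTranspose_apply]
  have key : ∀ t : ℝ, 0 ≤ 2 * t * s + α * t ^ 2 := by
    intro t
    have h2 := hM.dotProduct_mulVec_nonneg (Sum.elim u (fun _ => t))
    have hcol : ∀ i : Fin d, (M *ᵥ Sum.elim u (fun _ => t)) (Sum.inl i)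
        = t * M (Sum.inl i) (Sum.inr ()) := by
      intro i
      have hA0 : (A.mulVec u) i = 0 := by rw [hu]; rfl
      simp only [Matrix.mulVec, dotProduct] at hA0 ⊢
      rw [Fintype.sum_sum_type]
      simp only [Sum.elim_inl, Sum.elim_inr, Finset.univ_unique, Finset.sum_singleton]
      rw [show ∑ j, M (Sum.inl i) (Sum.inl j) * u j = ∑ j, A i j * u j from
        Finset.sum_congr rfl fun j _ => by rw [hblk]]
      rw [hA0, zero_add, mul_comm]
    have hlast : (M *ᵥ Sum.elim u (fun _ => t)) (Sum.inr ()) = s + α * t := by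
      simp only [Matrix.mulVec, dotProduct]
      rw [Fintype.sum_sum_type]
      simp only [Sum.elim_inl, Sum.elim_inr, Finset.univ_unique, Finset.sum_singleton]
      have : ∑ j, M (Sum.inr ()) (Sum.inl j) * u j = s := by
        rw [hs]; simp only [dotProduct]
        exact Finset.sum_congr rfl fun j _ => by rw [hherm]
      rw [this, hα, mul_comm]
    have hQ : dotProduct (star (Sum.elim u (fun _ => t)))
        (M *ᵥ Sum.elim u (fun _ => t)) = 2 * t * s + α * t ^ 2 := by
      simp only [dotProduct, Pi.star_apply, star_trivial]
      rw [Fintype.sum_sum_type]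
      simp only [Sum.elim_inl, Sum.elim_inr, Finset.univ_unique, Finset.sum_singleton]
      rw [show ∑ i, u i * (M *ᵥ Sum.elim u (fun _ => t)) (Sum.inl i)
          = ∑ i, u i * (t * M (Sum.inl i) (Sum.inr ())) from
        Finset.sum_congr rfl fun i _ => by rw [hcol]]
      rw [hlast]
      have : ∑ i, u i * (t * M (Sum.inl i) (Sum.inr ())) = t * s := by
        rw [hs]; simp only [dotProduct]
        rw [Finset.mul_sum]
        exact Finset.sum_congr rfl fun i _ => by ring
      rw [this]; ring
    rw [hQ] at h2
    exact h2
  have hd := discrim_le_zero (a := α) (b := 2 * s) (c := 0)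
    (fun x => by have := key x; nlinarith)
  rw [discrim] at hd
  have hs2 : s * s = 0 := by nlinarith
  have : s = 0 := by nlinarith
  rw [hs] at this
  exact this

/-- Let `A, B ∈ ℝ^{d×d}` be symmetric positive semidefinite and `b ∈ ℝ^d`. There exist
positive semidefinite `(d+1)×(d+1)` extensions `Â, B̂` of `A, B` whose last-column entries
sum to `b` iff `Ax + By = b` has a solution. -/
theorem stmt8 {d : ℕ} (A B : Matrix (Fin d) (Fin d) ℝ) (hA : A.PosSemidef)
    (hB : B.PosSemidef) (b : Fin d → ℝ) :
    (∃ Ahat Bhat : Matrix (Fin d ⊕ Unit) (Fin d ⊕ Unit) ℝ,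
        Ahat.PosSemidef ∧ Bhat.PosSemidef ∧
        (∀ i j : Fin d, Ahat (Sum.inl i) (Sum.inl j) = A i j) ∧
        (∀ i j : Fin d, Bhat (Sum.inl i) (Sum.inl j) = B i j) ∧
        (∀ i : Fin d, Ahat (Sum.inl i) (Sum.inr ()) + Bhat (Sum.inl i) (Sum.inr ()) = b i)) ↔
      (∃ x y : Fin d → ℝ, A.mulVec x + B.mulVec y = b) := by
  constructor
  · rintro ⟨Ahat, Bhat, hAhat, hBhat, hAblk, hBblk, hsum⟩
    obtain ⟨x, hx⟩ := exists_mulVec_eq hA.isHermitian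
      (fun i => Ahat (Sum.inl i) (Sum.inr ()))
      (fun u hu => ext_col_orth hAhat hAblk u hu)
    obtain ⟨y, hy⟩ := exists_mulVec_eq hB.isHermitian
      (fun i => Bhat (Sum.inl i) (Sum.inr ()))
      (fun u hu => ext_col_orth hBhat hBblk u hu)
    refine ⟨x, y, ?_⟩
    funext i
    rw [Pi.add_apply, hx, hy]
    exact hsum i
  · rintro ⟨x, y, hxy⟩
    set P : Matrix (Fin d) (Fin d ⊕ Unit) ℝ := fromCols 1 (replicateCol Unit x) with hP
    set Q : Matrix (Fin d) (Fin d ⊕ Unit) ℝ := fromCols 1 (replicateCol Unit y) with hQ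
    refine ⟨Pᴴ * A * P, Qᴴ * B * Q, hA.conjTranspose_mul_mul_same P,
      hB.conjTranspose_mul_mul_same Q, ?_, ?_, ?_⟩
    · intro i j
      simp [hP, Matrix.mul_apply, fromCols, conjTranspose_apply, one_apply,
        Finset.sum_ite_eq, Finset.sum_ite_eq']
    · intro i j
      simp [hQ, Matrix.mul_apply, fromCols, conjTranspose_apply, one_apply,
        Finset.sum_ite_eq, Finset.sum_ite_eq']
    · intro i
      have h1 : (Pᴴ * A * P) (Sum.inl i) (Sum.inr ()) = (A.mulVec x) i := by
        simp [hP, Matrix.mul_apply, fromCols, conjTranspose_apply, one_apply,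
          Finset.sum_ite_eq, Finset.sum_ite_eq', Matrix.mulVec, dotProduct, replicateCol]
      have h2 : (Qᴴ * B * Q) (Sum.inl i) (Sum.inr ()) = (B.mulVec y) i := by
        simp [hQ, Matrix.mul_apply, fromCols, conjTranspose_apply, one_apply,
          Finset.sum_ite_eq, Finset.sum_ite_eq', Matrix.mulVec, dotProduct, replicateCol]
      rw [h1, h2, ← Pi.add_apply, hxy]
end

section
/- Let K be a measure on ℝ^d with K({0}) = 0 and ∫ |x|² K(dx) < ∞, and let = [[A, b],[bᵀ, c]] ∈ ℝ^{(d+1)×(d+1)} be symmetric positive semidefinite with A_{ij} = ∫ x_i x_j K(dx) for all i, j ≤ d. Then there exists a measure K̂ on ℝ^{d+1} with K̂({0}) = 0 and ∫ |x̂|² K̂(dx̂) < ∞ such that: (a) for every nonnegative measurable f̂ : ℝ^{d+1} → ℝ₊, ∫ f̂(x̂) K̂(dx̂) = ∫ f̂(x, ⟨A†b, x⟩) K(dx); (b) for every nonnegative measurable f : ℝ^d → ℝ₊, ∫ f(x) K(dx) = ∫_{ℝ^{d+1}} f(x) K̂(dx̂) where x denotes the first d coordinates of x̂; and (c) Â_{i,j}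 = ∫ x̂_i x̂_j K̂(dx̂) for all i, j ∈ {1,...,d+1} with i ≤ d or j ≤ d. -/
open Matrix MeasureTheory
open scoped ENNReal

section LA
variable {d : ℕ} {A : Matrix (Fin d) (Fin d) ℝ}

lemma real_conjT {n m : Type*} (M : Matrix n m ℝ) : Mᴴ = Mᵀ := by
  ext i j; simp [conjTranspose_apply]

lemma exists_mp (hA : A.IsHermitian) : ∃ B, IsMoorePenroseInverse A B := by
  classical
  set U : Matrix (Fin d) (Fin d) ℝ :=
    (Matrix.IsHermitian.eigenvectorUnitary hA : Matrix (Fin d) (Fin d) ℝ) with hUdef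
  have hU2 : star U * U = 1 := Unitary.coe_star_mul_self _
  set lam : Fin d → ℝ := hA.eigenvalues with hlam
  set M : (Fin d → ℝ) → Matrix (Fin d) (Fin d) ℝ :=
    fun f => U * Matrix.diagonal f * star U with hM
  have hmul : ∀ f g, M f * M g = M (f * g) := by
    intro f g
    simp only [hM, Matrix.mul_assoc]
    rw [← Matrix.mul_assoc (star U) U (diagonal g * star U), hU2, Matrix.one_mul,
      ← Matrix.mul_assoc (diagonal f) (diagonal g) (star U), diagonal_mul_diagonal]
    rfl
  have htr : ∀ f, (M f)ᵀ = M f := by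
    intro f
    rw [← real_conjT]
    simp only [hM, conjTranspose_mul, conjTranspose_conjTranspose, diagonal_conjTranspose,
      Matrix.mul_assoc]
    congr 2
  have hAM : A = M lam := by
    simpa using hA.spectral_theorem
  set lam' : Fin d → ℝ := fun i => if lam i = 0 then 0 else (lam i)⁻¹ with hlam'
  have h1 : (lam * lam') * lam = lam := by
    funext i; by_cases h : lam i = 0 <;>
      simp [hlam', h, Pi.mul_apply, mul_inv_cancel₀]
  have h2 : (lam' * lam) * lam' = lam' := by
    funext i; by_cases h : lam i = 0 <;>
      simp [hlam', h, Pi.mul_apply, inv_mul_cancel₀]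
  refine ⟨M lam', ?_, ?_, ?_, ?_⟩
  · rw [hAM, hmul, hmul, h1]
  · rw [hAM, hmul, hmul, h2]
  · rw [hAM, hmul, htr]
  · rw [hAM, hmul, htr]

lemma mp_spec (hA : A.IsHermitian) : IsMoorePenroseInverse A (moorePenrose A) := by
  rw [moorePenrose, dif_pos (exists_mp hA)]
  exact (exists_mp hA).choose_spec

lemma mp_proj (hA : A.IsHermitian) {b : Fin d → ℝ} (hb : ∃ u, A *ᵥ u = b) :
    A *ᵥ ((moorePenrose A) *ᵥ b) = b := by
  obtain ⟨u, hu⟩ := hb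
  calc A *ᵥ ((moorePenrose A) *ᵥ b) = (A * moorePenrose A * A) *ᵥ u := by
        rw [← hu, Matrix.mulVec_mulVec, Matrix.mulVec_mulVec]
    _ = b := by rw [(mp_spec hA).1, hu]

lemma mem_range_of_perp (hA : A.IsHermitian) {b : Fin d → ℝ}
    (hperp : ∀ v, A *ᵥ v = 0 → b ⬝ᵥ v = 0) : ∃ u, A *ᵥ u = b := by
  classical
  set U : Matrix (Fin d) (Fin d) ℝ :=
    (Matrix.IsHermitian.eigenvectorUnitary hA : Matrix (Fin d) (Fin d) ℝ) with hUdef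
  have hU1 : U * star U = 1 := Unitary.coe_mul_star_self _
  have hU2 : star U * U = 1 := Unitary.coe_star_mul_self _
  set lam : Fin d → ℝ := hA.eigenvalues with hlam
  have hAM : A = U * Matrix.diagonal lam * star U := by
    simpa using hA.spectral_theorem
  have hADU : A * U = U * Matrix.diagonal lam := by
    rw [hAM, Matrix.mul_assoc, Matrix.mul_assoc, hU2, Matrix.mul_one]
  set β : Fin d → ℝ := (star U) *ᵥ b with hβ
  have hbzero : ∀ i, lam i = 0 → β i = 0 := by
    intro i hi
    have hv : A *ᵥ (U *ᵥ Pi.single i 1) = 0 := by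
      rw [Matrix.mulVec_mulVec, hADU, ← Matrix.mulVec_mulVec]
      have : Matrix.diagonal lam *ᵥ Pi.single i 1 = 0 := by
        funext j
        rw [Matrix.mulVec_diagonal]
        by_cases h : j = i <;> simp [h, hi]
      rw [this, Matrix.mulVec_zero]
    have heq : (star U *ᵥ b) i = b ⬝ᵥ (U *ᵥ Pi.single i 1) := by
      simp [Matrix.mulVec, dotProduct, Pi.single_apply, mul_ite, Finset.sum_ite_eq, Finset.sum_ite_eq', mul_comm]
    rw [hβ, heq]
    exact hperp _ hv
  set lam' : Fin d → ℝ := fun i => if lam i = 0 then 0 else (lam i)⁻¹ with hlam'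
  refine ⟨U *ᵥ (fun i => lam' i * β i), ?_⟩
  rw [Matrix.mulVec_mulVec, hADU, ← Matrix.mulVec_mulVec]
  have : Matrix.diagonal lam *ᵥ (fun i => lam' i * β i) = β := by
    funext i
    rw [Matrix.mulVec_diagonal]
    by_cases h : lam i = 0
    · simp [hlam', h, hbzero i h]
    · simp only [hlam', h, if_false]; rw [mul_inv_cancel_left₀ h]
  rw [this, hβ, Matrix.mulVec_mulVec, hU1, Matrix.one_mulVec]

end LA


lemma perp_of_psd {d : ℕ} {A : Matrix (Fin d) (Fin d) ℝ} {b : Fin d → ℝ} {c : ℝ}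
    (hhat : (hatMatrix A b c).PosSemidef) :
    ∀ v, A *ᵥ v = 0 → b ⬝ᵥ v = 0 := by
  intro v hv
  by_contra hr
  set r := b ⬝ᵥ v with hrdef
  set t : ℝ := -(c + 1) / (2 * r) with htdef
  have hq := hhat.dotProduct_mulVec_nonneg (Sum.elim (t • v) fun _ => 1)
  have hmv : ((hatMatrix A b c) *ᵥ Sum.elim (t • v) fun _ => 1) =
      Sum.elim b (fun _ => t * r + c) := by
    funext k
    rw [hatMatrix, Matrix.fromBlocks_mulVec]
    simp only [Sum.elim_comp_inl, Sum.elim_comp_inr]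
    cases k with
    | inl i =>
      simp only [Sum.elim_inl, Pi.add_apply]
      rw [show A *ᵥ (t • v) = 0 by rw [Matrix.mulVec_smul, hv, smul_zero]]
      simp [Matrix.mulVec, dotProduct]
    | inr u =>
      simp only [Sum.elim_inr, Pi.add_apply, Matrix.mulVec, dotProduct,
        Matrix.of_apply, Pi.smul_apply, smul_eq_mul, Finset.univ_unique,
        Finset.sum_singleton, mul_one]
      rw [hrdef, dotProduct, Finset.mul_sum]
      exact congrArg (· + c) (Finset.sum_congr rfl fun i _ => by ring)
  rw [hmv] at hq
  simp only [dotProduct, Fintype.sum_sum_type, Sum.elim_inl, Sum.elim_inr,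
    star_trivial, Pi.smul_apply, smul_eq_mul, one_mul, Finset.univ_unique,
    Finset.sum_singleton] at hq
  have hsum : ∑ i : Fin d, t * v i * b i = t * r := by
    rw [hrdef, dotProduct, Finset.mul_sum]
    exact Finset.sum_congr rfl fun i _ => by ring
  rw [hsum] at hq
  have htr : t * r = -(c + 1) / 2 := by
    rw [htdef]; field_simp
  rw [htr] at hq
  linarith


/-- Given a measure `K` on `ℝ^d` with `K({0}) = 0` and finite second moments, and a
positive semidefinite `Â = [[A, b],[bᵀ, c]]` with `A_{ij} = ∫ x_i x_j K(dx)`, there exists a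
measure `K̂` on `ℝ^{d+1}` (the pushforward of `K` under `x ↦ (x, ⟨A†b, x⟩)`) with
`K̂({0}) = 0`, finite second moments, compatible integrals, and matching mixed second
moments for all indices `(i,j)` with `i ≤ d` or `j ≤ d`. -/
theorem stmt13 {d : ℕ} (K : Measure (Fin d → ℝ))
    (hK0 : K {0} = 0)
    (hK2 : ∫⁻ x, ENNReal.ofReal (∑ i, (x i) ^ 2) ∂K ≠ ⊤)
    (A : Matrix (Fin d) (Fin d) ℝ) (b : Fin d → ℝ) (c : ℝ)
    (hhat : (hatMatrix A b c).PosSemidef)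
    (hA : ∀ i j : Fin d, A i j = ∫ x, x i * x j ∂K) :
    ∃ Khat : Measure ((Fin d ⊕ Unit) → ℝ),
      Khat {0} = 0 ∧
      (∫⁻ x, ENNReal.ofReal (∑ i, (x i) ^ 2) ∂Khat) ≠ ⊤ ∧
      (∀ f : ((Fin d ⊕ Unit) → ℝ) → ℝ≥0∞, Measurable f →
        ∫⁻ x, f x ∂Khat =
          ∫⁻ x, f (Sum.elim x (fun _ => (moorePenrose A).mulVec b ⬝ᵥ x)) ∂K) ∧
      (∀ f : (Fin d → ℝ) → ℝ≥0∞, Measurable f →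
        ∫⁻ x, f x ∂K = ∫⁻ x, f (fun i => x (Sum.inl i)) ∂Khat) ∧
      (∀ i j : Fin d ⊕ Unit, i.isLeft = true ∨ j.isLeft = true →
        hatMatrix A b c i j = ∫ x, x i * x j ∂Khat) := by
  classical
  have hAsym : A.IsHermitian := by
    rw [Matrix.IsHermitian, real_conjT]
    ext i j
    rw [Matrix.transpose_apply, hA i j, hA j i]
    simp_rw [mul_comm]
  set w : Fin d → ℝ := (moorePenrose A) *ᵥ b with hw
  have hAw : A *ᵥ w = b := mp_proj hAsym (mem_range_of_perp hAsym (perp_of_psd hhat))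
  set T : (Fin d → ℝ) → ((Fin d ⊕ Unit) → ℝ) :=
    fun x => Sum.elim x (fun _ => w ⬝ᵥ x) with hTdef
  have hTmeas : Measurable T := by
    rw [measurable_pi_iff]
    rintro (i | u)
    · exact measurable_pi_apply i
    · exact Finset.measurable_sum (f := fun j (x : Fin d → ℝ) => w j * x j) Finset.univ
        (fun j _ => by fun_prop)
  refine ⟨K.map T, ?_, ?_, ?_, ?_, ?_⟩
  · rw [Measure.map_apply hTmeas (measurableSet_singleton 0)]
    have hpre : T ⁻¹' {0} = {0} := by
      ext x
      simp only [Set.mem_preimage, Set.mem_singleton_iff]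
      constructor
      · intro h; funext i; exact congrFun h (Sum.inl i)
      · rintro rfl; funext k; cases k <;> simp [hTdef, dotProduct]
    rw [hpre]; exact hK0
  · have hmeas2 : Measurable fun y : (Fin d ⊕ Unit) → ℝ => ENNReal.ofReal (∑ i, (y i) ^ 2) :=
      (Finset.measurable_sum _ fun i _ => (measurable_pi_apply i).pow_const 2).ennreal_ofReal
    rw [lintegral_map hmeas2 hTmeas]
    have hbound : ∀ x : Fin d → ℝ,
        (∑ i : Fin d ⊕ Unit, (T x i) ^ 2) ≤ (1 + ∑ j, (w j) ^ 2) * ∑ i, (x i) ^ 2 := by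
      intro x
      have hcs : (∑ j, w j * x j) ^ 2 ≤ (∑ j, (w j) ^ 2) * ∑ j, (x j) ^ 2 :=
        Finset.sum_mul_sq_le_sq_mul_sq _ _ _
      have hTsum : ∑ i : Fin d ⊕ Unit, (T x i) ^ 2
          = (∑ i, (x i) ^ 2) + (∑ j, w j * x j) ^ 2 := by
        simp [Fintype.sum_sum_type, hTdef, dotProduct]
      rw [hTsum]
      nlinarith [Finset.sum_nonneg fun i (_ : i ∈ Finset.univ) => sq_nonneg (x i)]
    have hle1 : ∫⁻ x, ENNReal.ofReal (∑ i : Fin d ⊕ Unit, (T x i) ^ 2) ∂K ≤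
        ∫⁻ x, ENNReal.ofReal (1 + ∑ j, (w j) ^ 2) *
          ENNReal.ofReal (∑ i, (x i) ^ 2) ∂K := by
      refine lintegral_mono fun x => ?_
      rw [← ENNReal.ofReal_mul (by positivity)]
      exact ENNReal.ofReal_le_ofReal (hbound x)
    rw [lintegral_const_mul' _ _ ENNReal.ofReal_ne_top] at hle1
    exact ne_top_of_le_ne_top (ENNReal.mul_ne_top ENNReal.ofReal_ne_top hK2) hle1
  · intro f hf
    exact lintegral_map hf hTmeas
  · intro f hf
    rw [lintegral_map (f := fun y : (Fin d ⊕ Unit) → ℝ => f (fun i => y (Sum.inl i)))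
      (hf.comp (measurable_pi_lambda _ fun i => measurable_pi_apply (Sum.inl i))) hTmeas]
    rfl
  · have hg : Integrable (fun x : Fin d → ℝ => ∑ i, (x i) ^ 2) K := by
      refine ⟨(Finset.measurable_sum _ fun i _ =>
        (measurable_pi_apply i).pow_const 2).aestronglyMeasurable, ?_⟩
      rw [hasFiniteIntegral_iff_ofReal (Filter.Eventually.of_forall fun x =>
        Finset.sum_nonneg fun i _ => sq_nonneg _)]
      exact lt_top_iff_ne_top.2 hK2
    have hint : ∀ i j : Fin d, Integrable (fun x => x i * x j) K := by
      intro i j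
      refine hg.mono' ((measurable_pi_apply i).mul
        (measurable_pi_apply j)).aestronglyMeasurable
        (Filter.Eventually.of_forall fun x => ?_)
      have hi : (x i) ^ 2 ≤ ∑ k, (x k) ^ 2 :=
        Finset.single_le_sum (fun k _ => sq_nonneg (x k)) (Finset.mem_univ i)
      have hj : (x j) ^ 2 ≤ ∑ k, (x k) ^ 2 :=
        Finset.single_le_sum (fun k _ => sq_nonneg (x k)) (Finset.mem_univ j)
      rw [Real.norm_eq_abs, abs_mul]
      nlinarith [abs_nonneg (x i), abs_nonneg (x j), sq_abs (x i), sq_abs (x j),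
        sq_nonneg (|x i| - |x j|)]
    have hmom : ∀ φ : ((Fin d ⊕ Unit) → ℝ) → ℝ, Measurable φ →
        ∫ y, φ y ∂(K.map T) = ∫ x, φ (T x) ∂K := fun φ hφ =>
      integral_map hTmeas.aemeasurable hφ.aestronglyMeasurable
    have key : ∀ i : Fin d, ∫ x, x i * (w ⬝ᵥ x) ∂K = b i := by
      intro i
      have h1 : ∀ x : Fin d → ℝ, x i * (w ⬝ᵥ x) = ∑ k, w k * (x i * x k) := by
        intro x
        rw [dotProduct, Finset.mul_sum]
        exact Finset.sum_congr rfl fun k _ => by ring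
      simp_rw [h1]
      rw [integral_finset_sum _ fun k _ => (hint i k).const_mul (w k)]
      have h2 : ∀ k, ∫ x, w k * (x i * x k) ∂K = w k * A i k := by
        intro k; rw [integral_const_mul, ← hA i k]
      simp_rw [h2]
      have h3 : ∑ k, w k * A i k = (A *ᵥ w) i := by
        rw [Matrix.mulVec, dotProduct]
        exact Finset.sum_congr rfl fun k _ => by ring
      rw [h3, hAw]
    rintro (i | i) (j | j) hij
    · rw [hmom (fun y => y (Sum.inl i) * y (Sum.inl j))
        ((measurable_pi_apply _).mul (measurable_pi_apply _))]
      exact hA i j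
    · rw [hmom (fun y => y (Sum.inl i) * y (Sum.inr j))
        ((measurable_pi_apply _).mul (measurable_pi_apply _))]
      exact (key i).symm
    · rw [hmom (fun y => y (Sum.inr i) * y (Sum.inl j))
        ((measurable_pi_apply _).mul (measurable_pi_apply _))]
      have : ∀ x : Fin d → ℝ, (w ⬝ᵥ x) * x j = x j * (w ⬝ᵥ x) := fun x => mul_comm _ _
      simp_rw [show (fun x : Fin d → ℝ => T x (Sum.inr i) * T x (Sum.inl j))
        = fun x => x j * (w ⬝ᵥ x) from funext fun x => mul_comm _ _]
      exact (key j).symm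
    · simp at hij
end
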